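/- For indeterminates x, y, z over ℚ and any natural number k, the identity ∑_{j=0}^{k} (x)_j (y)_j (-k)_j / ((z)_j (1+x+y-z-k)_j · j!) = (z-x)_k (z-y)_k / ((z)_k (z-x-y)_k) holds in the rational function field ℚ(x,y,z), where (x)_j denotes the Pochhammer symbol x(x+1)⋯(x+j-1) with (x)_0 = 1. -/

import Mathlib

open Finset

/-- The field `ℚ(x,y,z)` of rational functions in three variables over `ℚ`. -/
noncomputable abbrev RatField3 : Type := FractionRing (MvPolynomial (Fin 3) ℚ)

/-- Pochhammer symbol `(a)_j = a(a+1)⋯(a+j-1)`, with `(a)_0 = 1`. -/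
noncomputable def poch (a : RatField3) (j : ℕ) : RatField3 :=
  ∏ i ∈ Finset.range j, (a + (i : RatField3))

noncomputable def xvar : RatField3 :=
  algebraMap (MvPolynomial (Fin 3) ℚ) RatField3 (MvPolynomial.X 0)
noncomputable def yvar : RatField3 :=
  algebraMap (MvPolynomial (Fin 3) ℚ) RatField3 (MvPolynomial.X 1)
noncomputable def zvar : RatField3 :=
  algebraMap (MvPolynomial (Fin 3) ℚ) RatField3 (MvPolynomial.X 2)

namespace PS

abbrev A := MvPolynomial (Fin 3) ℚ

lemma amap_ne (p : A) (hp : p ≠ 0) : algebraMap A RatField3 p ≠ 0 := fun h =>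
  hp (IsFractionRing.injective A RatField3 (by simpa using h))

lemma lin_ne (q1 q0 : ℤ) (m : ℤ) :
    (q1 : RatField3) * xvar + zvar + (q0 : RatField3) * yvar
      + (m : RatField3) ≠ 0 := by
  have : (q1 : RatField3) * xvar + zvar + (q0 : RatField3) * yvar
      + (m : RatField3)
      = algebraMap A RatField3
        ((q1 : A) * MvPolynomial.X 0 + MvPolynomial.X 2
          + (q0 : A) * MvPolynomial.X 1 + (m : A)) := by
    simp [xvar, yvar, zvar, map_add, map_mul, map_intCast]
  rw [this]
  apply amap_ne
  intro hzero
  have h := congrArg (MvPolynomial.eval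
    (fun j : Fin 3 => if j = 2 then ((1 - m : ℚ)) else 0)) hzero
  simp at h

/-- nonzero of `z + m` -/
lemma ne_z (m : ℤ) : zvar + (m : RatField3) ≠ 0 := fun h =>
  lin_ne 0 0 m (by push_cast; linear_combination h)

/-- nonzero of `x + y - z + m` (the `w` shape, negated) -/
lemma ne_w (m : ℤ) : xvar + yvar - zvar + (m : RatField3) ≠ 0 := fun h =>
  lin_ne (-1) (-1) (-m) (by push_cast; linear_combination -h)

lemma ne_zx (m : ℤ) : zvar - xvar + (m : RatField3) ≠ 0 := fun h =>
  lin_ne (-1) 0 m (by push_cast; linear_combination h)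

lemma ne_zy (m : ℤ) : zvar - yvar + (m : RatField3) ≠ 0 := fun h =>
  lin_ne 0 (-1) m (by push_cast; linear_combination h)

lemma ne_zxy (m : ℤ) : zvar - xvar - yvar + (m : RatField3) ≠ 0 := fun h =>
  lin_ne (-1) (-1) m (by push_cast; linear_combination h)

lemma poch_zero (a : RatField3) : poch a 0 = 1 := by simp [poch]

lemma poch_succ (a : RatField3) (j : ℕ) :
    poch a (j + 1) = poch a j * (a + j) := Finset.prod_range_succ _ _

lemma poch_succ' (a : RatField3) (j : ℕ) :
    poch a (j + 1) = a * poch (a + 1) j := by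
  rw [poch, Finset.prod_range_succ']
  rw [Finset.prod_congr rfl (fun i _ => show a + ((i+1 : ℕ) : RatField3)
    = (a + 1) + (i : RatField3) by push_cast; ring)]
  simp [poch, mul_comm]

lemma poch_ne {a : RatField3} (h : ∀ m : ℕ, a + (m : RatField3) ≠ 0) (j : ℕ) :
    poch a j ≠ 0 :=
  Finset.prod_ne_zero_iff.mpr fun m _ => h m

lemma poch_z_ne (j : ℕ) : poch zvar j ≠ 0 :=
  poch_ne (fun m => by simpa using ne_z m) j

lemma poch_w_ne (k : ℕ) (j : ℕ) :
    poch (1 + xvar + yvar - zvar - (k : RatField3)) j ≠ 0 :=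
  poch_ne (fun m => fun h => ne_w (1 - k + m) (by push_cast; linear_combination h)) j

lemma poch_zx_ne (j : ℕ) : poch (zvar - xvar) j ≠ 0 :=
  poch_ne (fun m => by simpa using ne_zx m) j

lemma poch_zy_ne (j : ℕ) : poch (zvar - yvar) j ≠ 0 :=
  poch_ne (fun m => by simpa using ne_zy m) j

lemma poch_zxy_ne (j : ℕ) : poch (zvar - xvar - yvar) j ≠ 0 :=
  poch_ne (fun m => by simpa using ne_zxy m) j

lemma poch_negk_self (k : ℕ) : poch (-(k : RatField3)) (k + 1) = 0 :=
  Finset.prod_eq_zero (Finset.self_mem_range_succ k) (by simp)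

lemma fact_ne (j : ℕ) : ((j.factorial : RatField3)) ≠ 0 :=
  Nat.cast_ne_zero.mpr j.factorial_ne_zero


/-- The summand of the Pfaff–Saalschütz sum. -/
noncomputable def T (k j : ℕ) : RatField3 :=
  poch xvar j * poch yvar j * poch (-(k : RatField3)) j /
    (poch zvar j * poch (1 + xvar + yvar - zvar - (k : RatField3)) j *
      (j.factorial : RatField3))

/-- WZ certificate function. -/
noncomputable def Hf (k : ℕ) : ℕ → RatField3
  | 0 => 0
  | (i + 1) =>
      ((zvar - 1) * (zvar - xvar - yvar + (k : RatField3)) -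
          ((i : RatField3) + 1) * ((i : RatField3) + xvar + yvar - (k : RatField3))) *
        poch xvar (i + 1) * poch yvar (i + 1) * poch (-(k : RatField3)) i /
        ((zvar + (k : RatField3)) * (zvar - xvar - yvar + (k : RatField3)) *
          poch zvar (i + 1) * poch (1 + xvar + yvar - zvar - (k : RatField3)) (i + 1) *
          (i.factorial : RatField3))

end PS

open PS

set_option maxHeartbeats 1000000 in
lemma step0 (k : ℕ) :
    T (k + 1) 0 =
      (zvar - xvar + (k : RatField3)) * (zvar - yvar + (k : RatField3)) /
          ((zvar + (k : RatField3)) * (zvar - xvar - yvar + (k : RatField3))) * T k 0 +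
        (Hf k (0 + 1) - Hf k 0) := by
  have hzk : zvar + (k : RatField3) ≠ 0 := by
    intro h; exact PS.ne_z k (by push_cast at h ⊢; linear_combination h)
  have hzxyk : zvar - xvar - yvar + (k : RatField3) ≠ 0 := by
    intro h; exact PS.ne_zxy k (by push_cast at h ⊢; linear_combination h)
  have hz0 : zvar ≠ 0 := by
    intro h; exact PS.ne_z 0 (by push_cast at h ⊢; linear_combination h)
  have hw0 : 1 + xvar + yvar - zvar - (k : RatField3) ≠ 0 := by
    intro h; exact PS.ne_w (1 - k) (by push_cast at h ⊢; linear_combination h)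
  simp only [T, Hf, poch_zero, poch_succ, Nat.factorial_zero, Nat.factorial_one]
  simp only [Nat.cast_zero, Nat.cast_one, add_zero, zero_add, one_mul, mul_one, sub_zero]
  rw [one_div_one, mul_one]
  rw [div_add_div _ _ (mul_ne_zero hzk hzxyk)
      (mul_ne_zero (mul_ne_zero (mul_ne_zero hzk hzxyk) hz0) hw0)]
  rw [eq_div_iff (mul_ne_zero (mul_ne_zero hzk hzxyk)
      (mul_ne_zero (mul_ne_zero (mul_ne_zero hzk hzxyk) hz0) hw0))]
  ring

set_option maxHeartbeats 8000000 in
lemma step_succ (k i : ℕ) :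
    T (k + 1) (i + 1) =
      (zvar - xvar + (k : RatField3)) * (zvar - yvar + (k : RatField3)) /
          ((zvar + (k : RatField3)) * (zvar - xvar - yvar + (k : RatField3))) * T k (i + 1) +
        (Hf k (i + 1 + 1) - Hf k (i + 1)) := by
  have hzk : zvar + (k : RatField3) ≠ 0 := by
    intro h; exact PS.ne_z k (by push_cast at h ⊢; linear_combination h)
  have hzxyk : zvar - xvar - yvar + (k : RatField3) ≠ 0 := by
    intro h; exact PS.ne_zxy k (by push_cast at h ⊢; linear_combination h)
  have hC : poch zvar i ≠ 0 := poch_z_ne i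
  have hV : poch (1 + xvar + yvar - zvar - (k : RatField3)) i ≠ 0 := poch_w_ne k i
  have hF : ((i.factorial : RatField3)) ≠ 0 := fact_ne i
  have hz1 : zvar + (i : RatField3) ≠ 0 := by
    intro h; exact PS.ne_z i (by push_cast at h ⊢; linear_combination h)
  have hz2 : zvar + ((i : RatField3) + 1) ≠ 0 := by
    intro h; exact PS.ne_z (i + 1) (by push_cast at h ⊢; linear_combination h)
  have hw1 : 1 + xvar + yvar - zvar - (k : RatField3) + (i : RatField3) ≠ 0 := by
    intro h; exact PS.ne_w (1 - k + i) (by push_cast at h ⊢; linear_combination h)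
  have hw2 : 1 + xvar + yvar - zvar - (k : RatField3) + ((i : RatField3) + 1) ≠ 0 := by
    intro h; exact PS.ne_w (1 - k + i + 1) (by push_cast at h ⊢; linear_combination h)
  have hwm : 1 + xvar + yvar - zvar - ((k : RatField3) + 1) ≠ 0 := by
    intro h; exact PS.ne_w (-(k : ℤ)) (by push_cast at h ⊢; linear_combination h)
  have hi1 : ((i : RatField3) + 1) ≠ 0 := by
    have := Nat.cast_ne_zero (R := RatField3).mpr (Nat.succ_ne_zero i)
    push_cast at this; exact this
  simp only [T, Hf]
  rw [poch_succ' (-((k : ℕ) + 1 : ℕ) : RatField3) i]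
  rw [show (-((k : ℕ) + 1 : ℕ) : RatField3) + 1 = -(k : RatField3) by push_cast; ring]
  rw [poch_succ' (1 + xvar + yvar - zvar - ((k : ℕ) + 1 : ℕ) : RatField3) i]
  rw [show (1 + xvar + yvar - zvar - ((k : ℕ) + 1 : ℕ) : RatField3) + 1
        = 1 + xvar + yvar - zvar - (k : RatField3) by push_cast; ring]
  simp only [poch_succ, Nat.factorial_succ]
  push_cast
  set x := xvar with hxdef
  set y := yvar with hydef
  set z := zvar with hzdef
  set A := poch xvar i with hAdef
  set B := poch yvar i with hBdef
  set C := poch zvar i with hCdef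
  set U := poch (-(k:RatField3)) i with hUdef
  set V := poch (1 + xvar + yvar - zvar - (k:RatField3)) i with hVdef
  set f := ((i.factorial : ℕ) : RatField3) with hfdef
  set n := ((i:ℕ) : RatField3) with hndef
  set m := ((k:ℕ) : RatField3) with hmdef
  set L := (z + m) * (z - x - y + m) * C * (z + n) * (z + (n + 1)) * V *
      (1 + x + y - z - (m + 1)) * (1 + x + y - z - m + n) * (1 + x + y - z - m + (n + 1)) *
      ((n + 1) * f) with hLdef
  have hcof1 : (z + m) * (z - x - y + m) * (z + (n + 1)) * (1 + x + y - z - m + n) * (1 + x + y - z - m + (n + 1)) ≠ 0 := by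
    repeat first | apply mul_ne_zero | assumption
  have hsplit1 : L = (C * (z + n) * ((1 + x + y - z - (m + 1)) * V) * ((n + 1) * f)) * ((z + m) * (z - x - y + m) * (z + (n + 1)) * (1 + x + y - z - m + n) * (1 + x + y - z - m + (n + 1))) := by
    rw [hLdef]; ac_rfl
  have e1 : A * (x + n) * (B * (y + n)) * (-(m + 1) * U) / (C * (z + n) * ((1 + x + y - z - (m + 1)) * V) * ((n + 1) * f)) = A * (x + n) * (B * (y + n)) * (-(m + 1) * U) * ((z + m) * (z - x - y + m) * (z + (n + 1)) * (1 + x + y - z - m + n) * (1 + x + y - z - m + (n + 1))) / L := by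
    rw [hsplit1, mul_div_mul_right _ _ hcof1]
  have hcof2 : (z + (n + 1)) * (1 + x + y - z - (m + 1)) * (1 + x + y - z - m + (n + 1)) ≠ 0 := by
    repeat first | apply mul_ne_zero | assumption
  have hsplit2 : L = ((z + m) * (z - x - y + m) * (C * (z + n) * (V * (1 + x + y - z - m + n)) * ((n + 1) * f))) * ((z + (n + 1)) * (1 + x + y - z - (m + 1)) * (1 + x + y - z - m + (n + 1))) := by
    rw [hLdef]; ac_rfl
  have e2 : (z - x + m) * (z - y + m) * (A * (x + n) * (B * (y + n)) * (U * (-m + n))) / ((z + m) * (z - x - y + m) * (C * (z + n) * (V * (1 + x + y - z - m + n)) * ((n + 1) * f))) = (z - x + m) * (z - y + m) * (A * (x + n) * (B * (y + n)) * (U * (-m + n))) * ((z + (n + 1)) * (1 + x + y - z - (m + 1)) * (1 + x + y - z - m + (n + 1))) / L := by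
    rw [hsplit2, mul_div_mul_right _ _ hcof2]
  have hcof3 : (1 + x + y - z - (m + 1)) ≠ 0 := by
    repeat first | apply mul_ne_zero | assumption
  have hsplit3 : L = ((z + m) * (z - x - y + m) * (C * (z + n) * (z + (n + 1))) * (V * (1 + x + y - z - m + n) * (1 + x + y - z - m + (n + 1))) * ((n + 1) * f)) * ((1 + x + y - z - (m + 1))) := by
    rw [hLdef]; ac_rfl
  have e3 : ((z - 1) * (z - x - y + m) - (n + 1 + 1) * (n + 1 + x + y - m)) * (A * (x + n) * (x + (n + 1))) * (B * (y + n) * (y + (n + 1))) * (U * (-m + n)) / ((z + m) * (z - x - y + m) * (C * (z + n) * (z + (n + 1))) * (V * (1 + x + y - z - m + n) * (1 + x + y - z - m + (n + 1))) * ((n + 1) * f)) = ((z - 1) * (z - x - y + m) - (n + 1 + 1) * (n + 1 + x + y - m)) * (A * (x + n) * (x + (n + 1))) * (B * (y + n) * (y + (n + 1))) * (U * (-m + n)) * ((1 + x + y - z - (m + 1))) / L := by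
    rw [hsplit3, mul_div_mul_right _ _ hcof3]
  have hcof4 : (z + (n + 1)) * (1 + x + y - z - (m + 1)) * (1 + x + y - z - m + (n + 1)) * (n + 1) ≠ 0 := by
    repeat first | apply mul_ne_zero | assumption
  have hsplit4 : L = ((z + m) * (z - x - y + m) * (C * (z + n)) * (V * (1 + x + y - z - m + n)) * f) * ((z + (n + 1)) * (1 + x + y - z - (m + 1)) * (1 + x + y - z - m + (n + 1)) * (n + 1)) := by
    rw [hLdef]; ac_rfl
  have e4 : ((z - 1) * (z - x - y + m) - (n + 1) * (n + x + y - m)) * (A * (x + n)) * (B * (y + n)) * U / ((z + m) * (z - x - y + m) * (C * (z + n)) * (V * (1 + x + y - z - m + n)) * f) = ((z - 1) * (z - x - y + m) - (n + 1) * (n + x + y - m)) * (A * (x + n)) * (B * (y + n)) * U * ((z + (n + 1)) * (1 + x + y - z - (m + 1)) * (1 + x + y - z - m + (n + 1)) * (n + 1)) / L := by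
    rw [hsplit4, mul_div_mul_right _ _ hcof4]
  rw [div_mul_div_comm]
  rw [e1, e2, e3, e4, div_sub_div_same, ← add_div]
  congr 1
  ring

lemma step (k j : ℕ) :
    T (k + 1) j =
      (zvar - xvar + (k : RatField3)) * (zvar - yvar + (k : RatField3)) /
          ((zvar + (k : RatField3)) * (zvar - xvar - yvar + (k : RatField3))) * T k j +
        (Hf k (j + 1) - Hf k j) := by
  cases j with
  | zero => exact step0 k
  | succ i => exact step_succ k i

lemma Tk_top (k : ℕ) : T k (k + 1) = 0 := by
  simp [T, poch_negk_self]

lemma Hf_top (k : ℕ) : Hf k (k + 1 + 1) = 0 := by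
  show Hf k (k + 1 + 1) = 0
  simp [Hf, poch_negk_self]

lemma rhs_succ (k : ℕ) :
    poch (zvar - xvar) (k + 1) * poch (zvar - yvar) (k + 1) /
        (poch zvar (k + 1) * poch (zvar - xvar - yvar) (k + 1)) =
      (zvar - xvar + (k : RatField3)) * (zvar - yvar + (k : RatField3)) /
          ((zvar + (k : RatField3)) * (zvar - xvar - yvar + (k : RatField3))) *
        (poch (zvar - xvar) k * poch (zvar - yvar) k /
          (poch zvar k * poch (zvar - xvar - yvar) k)) := by
  have hzk : zvar + (k : RatField3) ≠ 0 := by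
    intro h; exact PS.ne_z k (by push_cast at h ⊢; linear_combination h)
  have hzxyk : zvar - xvar - yvar + (k : RatField3) ≠ 0 := by
    intro h; exact PS.ne_zxy k (by push_cast at h ⊢; linear_combination h)
  have h1 : poch zvar k ≠ 0 := poch_z_ne k
  have h2 : poch (zvar - xvar - yvar) k ≠ 0 := poch_zxy_ne k
  rw [poch_succ, poch_succ, poch_succ, poch_succ, div_mul_div_comm,
    div_eq_div_iff
      (by repeat first | apply mul_ne_zero | assumption)
      (by repeat first | apply mul_ne_zero | assumption)]
  ring

set_option maxHeartbeats 3000000 in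
/-- **The Pfaff–Saalschütz identity** in `ℚ(x,y,z)`. -/
theorem pfaff_saalschutz (k : ℕ) :
    ∑ j ∈ Finset.range (k + 1),
        poch xvar j * poch yvar j * poch (-(k : RatField3)) j /
          (poch zvar j * poch (1 + xvar + yvar - zvar - (k : RatField3)) j *
            (j.factorial : RatField3)) =
      poch (zvar - xvar) k * poch (zvar - yvar) k /
        (poch zvar k * poch (zvar - xvar - yvar) k) := by

  induction k with
  | zero =>
      simp [poch_zero]
  | succ k ih =>
      show (∑ j ∈ Finset.range (k + 1 + 1), T (k + 1) j) = _
      have ih' : (∑ j ∈ Finset.range (k + 1), T k j) =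
          poch (zvar - xvar) k * poch (zvar - yvar) k /
            (poch zvar k * poch (zvar - xvar - yvar) k) := ih
      calc ∑ j ∈ Finset.range (k + 1 + 1), T (k + 1) j
          = ∑ j ∈ Finset.range (k + 1 + 1),
              ((zvar - xvar + (k : RatField3)) * (zvar - yvar + (k : RatField3)) /
                  ((zvar + (k : RatField3)) * (zvar - xvar - yvar + (k : RatField3))) * T k j +
                (Hf k (j + 1) - Hf k j)) := Finset.sum_congr rfl (fun j _ => step k j)
        _ = (∑ j ∈ Finset.range (k + 1 + 1),
              (zvar - xvar + (k : RatField3)) * (zvar - yvar + (k : RatField3)) /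
                  ((zvar + (k : RatField3)) * (zvar - xvar - yvar + (k : RatField3))) * T k j) +
            ∑ j ∈ Finset.range (k + 1 + 1), (Hf k (j + 1) - Hf k j) :=
          Finset.sum_add_distrib
        _ = (zvar - xvar + (k : RatField3)) * (zvar - yvar + (k : RatField3)) /
              ((zvar + (k : RatField3)) * (zvar - xvar - yvar + (k : RatField3))) *
              (∑ j ∈ Finset.range (k + 1 + 1), T k j) + (Hf k (k + 1 + 1) - Hf k 0) := by
            rw [← Finset.mul_sum, Finset.sum_range_sub]
        _ = (zvar - xvar + (k : RatField3)) * (zvar - yvar + (k : RatField3)) /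
              ((zvar + (k : RatField3)) * (zvar - xvar - yvar + (k : RatField3))) *
              ((∑ j ∈ Finset.range (k + 1), T k j) + T k (k + 1)) := by
            rw [Finset.sum_range_succ, Hf_top]
            simp [Hf]
        _ = (zvar - xvar + (k : RatField3)) * (zvar - yvar + (k : RatField3)) /
              ((zvar + (k : RatField3)) * (zvar - xvar - yvar + (k : RatField3))) *
              (poch (zvar - xvar) k * poch (zvar - yvar) k /
                (poch zvar k * poch (zvar - xvar - yvar) k)) := by
            rw [ih', Tk_top, add_zero]
        _ = _ := (rhs_succ k).symm
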